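/- arXiv:2206.09976 — 5 statements merged into one kernel-verified Lean document; each statement's English description precedes it below -/
import Mathlib

section
/- If Σ(θ) is a differentiable matrix-valued function of a real parameter θ with Σ(θ) symmetric positive definite, and M(θ) := Σ(θ)⁻¹ - Σ(θ)⁻¹X(XᵀΣ(θ)⁻¹X)⁻¹XᵀΣ(θ)⁻¹, then the derivative of M with respect to θ satisfies M'(θ) = -M(θ)·Σ'(θ)·M(θ). -/
open Matrix

section aux
attribute [local instance] Matrix.linftyOpNormedAddCommGroup Matrix.linftyOpNormedSpace
  Matrix.linftyOpNormedRing Matrix.linftyOpNormedAlgebra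

variable {a b : ℕ} {θ₀ : ℝ}

noncomputable def matPiEquiv (a b : ℕ) :
    Matrix (Fin a) (Fin b) ℝ ≃L[ℝ] (Fin a → Fin b → ℝ) :=
  (LinearEquiv.refl ℝ (Matrix (Fin a) (Fin b) ℝ) :
    Matrix (Fin a) (Fin b) ℝ ≃ₗ[ℝ] (Fin a → Fin b → ℝ)).toContinuousLinearEquiv

lemma entrywise_hasDerivAt_iff (f : ℝ → Matrix (Fin a) (Fin b) ℝ)
    (f' : Matrix (Fin a) (Fin b) ℝ) :
    (∀ i j, HasDerivAt (fun θ => f θ i j) (f' i j) θ₀) ↔ HasDerivAt f f' θ₀ := by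
  constructor
  · intro h
    have h2 : HasDerivAt (fun θ => (matPiEquiv a b).symm (f θ))
        ((matPiEquiv a b).symm f') θ₀ := by
      exact ((matPiEquiv a b).symm.toContinuousLinearMap.hasFDerivAt).comp_hasDerivAt θ₀
        (hasDerivAt_pi.2 fun i => hasDerivAt_pi.2 fun j => h i j)
    exact h2
  · intro h i j
    have h2 : HasDerivAt (fun θ => (matPiEquiv a b) (f θ)) ((matPiEquiv a b) f') θ₀ :=
      ((matPiEquiv a b).toContinuousLinearMap.hasFDerivAt).comp_hasDerivAt θ₀ h
    exact hasDerivAt_pi.1 (hasDerivAt_pi.1 h2 i) j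

end aux

section aux2
attribute [local instance] Matrix.linftyOpNormedAddCommGroup Matrix.linftyOpNormedSpace
  Matrix.linftyOpNormedRing Matrix.linftyOpNormedAlgebra

lemma entrywise_inv_hasDerivAt {a : ℕ} {θ₀ : ℝ} (f : ℝ → Matrix (Fin a) (Fin a) ℝ)
    (f' : Matrix (Fin a) (Fin a) ℝ)
    (hu : ∀ᶠ θ in nhds θ₀, IsUnit (f θ))
    (h : ∀ i j, HasDerivAt (fun θ => f θ i j) (f' i j) θ₀) :
    ∀ i j, HasDerivAt (fun θ => (f θ)⁻¹ i j)
      ((-((f θ₀)⁻¹ * f' * (f θ₀)⁻¹)) i j) θ₀ := by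
  have hf : HasDerivAt f f' θ₀ := (entrywise_hasDerivAt_iff f f').1 h
  have hu0 : IsUnit (f θ₀) := hu.self_of_nhds
  have hinv : HasFDerivAt Ring.inverse
      (-ContinuousLinearMap.mulLeftRight ℝ _ ↑hu0.unit⁻¹ ↑hu0.unit⁻¹) (f θ₀) := by
    simpa using hasFDerivAt_ringInverse (𝕜 := ℝ) hu0.unit
  have h2 : HasDerivAt (fun θ => Ring.inverse (f θ))
      (-((↑hu0.unit⁻¹ : Matrix (Fin a) (Fin a) ℝ) * f' * (↑hu0.unit⁻¹ : Matrix (Fin a) (Fin a) ℝ))) θ₀ := by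
    have h2' := hinv.comp_hasDerivAt θ₀ hf
    simp [Function.comp_def] at h2' ⊢
    exact h2'
  have hinveq : (↑hu0.unit⁻¹ : Matrix (Fin a) (Fin a) ℝ) = (f θ₀)⁻¹ := by
    rw [Matrix.nonsing_inv_eq_ringInverse]
    conv_rhs => rw [← hu0.unit_spec]
    rw [Ring.inverse_unit]
  rw [hinveq] at h2
  have h3 : HasDerivAt (fun θ => (f θ)⁻¹) (-((f θ₀)⁻¹ * f' * (f θ₀)⁻¹)) θ₀ := by
    apply h2.congr_of_eventuallyEq
    filter_upwards [hu] with θ hθ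
    rw [Matrix.nonsing_inv_eq_ringInverse]
  exact (entrywise_hasDerivAt_iff _ _).2 h3
end aux2

lemma entrywise_mul_hasDerivAt {a b c : ℕ} {θ₀ : ℝ}
    {A : ℝ → Matrix (Fin a) (Fin b) ℝ} {A' : Matrix (Fin a) (Fin b) ℝ}
    {B : ℝ → Matrix (Fin b) (Fin c) ℝ} {B' : Matrix (Fin b) (Fin c) ℝ}
    (hA : ∀ i j, HasDerivAt (fun θ => A θ i j) (A' i j) θ₀)
    (hB : ∀ i j, HasDerivAt (fun θ => B θ i j) (B' i j) θ₀) :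
    ∀ i j, HasDerivAt (fun θ => (A θ * B θ) i j)
      ((A' * B θ₀ + A θ₀ * B') i j) θ₀ := by
  intro i j
  have := HasDerivAt.fun_sum (u := Finset.univ)
    (fun k _ => ((hA i k).fun_mul (hB k j)))
  simpa [Matrix.mul_apply, Matrix.add_apply, Finset.sum_add_distrib] using this


/-- The matrix `M(Σ) = Σ⁻¹ - Σ⁻¹X(XᵀΣ⁻¹X)⁻¹XᵀΣ⁻¹`. -/
noncomputable def Mmat {n m : ℕ} (X : Matrix (Fin n) (Fin m) ℝ)
    (S : Matrix (Fin n) (Fin n) ℝ) : Matrix (Fin n) (Fin n) ℝ :=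
  S⁻¹ - S⁻¹ * X * (Xᵀ * S⁻¹ * X)⁻¹ * Xᵀ * S⁻¹

theorem deriv_M {n m : ℕ} (X : Matrix (Fin n) (Fin m) ℝ) (hX : X.rank = m)
    (s : Set ℝ) (hs : IsOpen s)
    (S : ℝ → Matrix (Fin n) (Fin n) ℝ) (S' : Matrix (Fin n) (Fin n) ℝ) (θ₀ : ℝ)
    (hθ₀ : θ₀ ∈ s)
    (hpos : ∀ θ ∈ s, (S θ).PosDef)
    (hinv : ∀ θ ∈ s, IsUnit (Xᵀ * (S θ)⁻¹ * X).det)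
    (hS : ∀ i j, HasDerivAt (fun θ => S θ i j) (S' i j) θ₀) :
    ∀ i j, HasDerivAt (fun θ => Mmat X (S θ) i j)
      ((-(Mmat X (S θ₀) * S' * Mmat X (S θ₀))) i j) θ₀ := by
  have hmem : ∀ᶠ θ in nhds θ₀, θ ∈ s := hs.mem_nhds hθ₀
  have hA : ∀ i j, HasDerivAt (fun θ => (S θ)⁻¹ i j)
      ((-((S θ₀)⁻¹ * S' * (S θ₀)⁻¹)) i j) θ₀ := by
    apply entrywise_inv_hasDerivAt S S' ?_ hS
    filter_upwards [hmem] with θ hθ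
    exact (Matrix.isUnit_iff_isUnit_det _).2
      (isUnit_iff_ne_zero.2 (hpos θ hθ).det_pos.ne')
  set A : Matrix (Fin n) (Fin n) ℝ := (S θ₀)⁻¹ with hAdef
  set A' : Matrix (Fin n) (Fin n) ℝ := -(A * S' * A) with hA'def
  have hXT : ∀ i j, HasDerivAt (fun _ : ℝ => Xᵀ i j)
      ((0 : Matrix (Fin m) (Fin n) ℝ) i j) θ₀ := fun i j => by
    simpa using hasDerivAt_const θ₀ (Xᵀ i j)
  have hXC : ∀ i j, HasDerivAt (fun _ : ℝ => X i j)
      ((0 : Matrix (Fin n) (Fin m) ℝ) i j) θ₀ := fun i j => by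
    simpa using hasDerivAt_const θ₀ (X i j)
  have hB1 := entrywise_mul_hasDerivAt hXT hA
  have hB := entrywise_mul_hasDerivAt hB1 hXC
  set B' : Matrix (Fin m) (Fin m) ℝ :=
    ((0 : Matrix (Fin m) (Fin n) ℝ) * A + Xᵀ * A') * X +
      Xᵀ * A * (0 : Matrix (Fin n) (Fin m) ℝ) with hB'def
  set C : Matrix (Fin m) (Fin m) ℝ := (Xᵀ * A * X)⁻¹ with hCdef
  have hC : ∀ i j, HasDerivAt (fun θ => ((Xᵀ * (S θ)⁻¹ * X)⁻¹) i j)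
      ((-(C * B' * C)) i j) θ₀ := by
    apply entrywise_inv_hasDerivAt _ _ ?_ hB
    filter_upwards [hmem] with θ hθ
    exact (Matrix.isUnit_iff_isUnit_det _).2 (hinv θ hθ)
  have hP1 := entrywise_mul_hasDerivAt hA hXC
  have hP2 := entrywise_mul_hasDerivAt hP1 hC
  have hP3 := entrywise_mul_hasDerivAt hP2 hXT
  have hP4 := entrywise_mul_hasDerivAt hP3 hA
  have hM : ∀ i j, HasDerivAt (fun θ => Mmat X (S θ) i j)
      ((A' - ((((A' * X + A * (0 : Matrix (Fin n) (Fin m) ℝ)) * C +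
        A * X * -(C * B' * C)) * Xᵀ +
        A * X * C * (0 : Matrix (Fin m) (Fin n) ℝ)) * A +
        A * X * C * Xᵀ * A')) i j) θ₀ := by
    intro i j
    have := (hA i j).fun_sub (hP4 i j)
    simpa [Mmat, Matrix.sub_apply] using this
  have key : (A' - ((((A' * X + A * (0 : Matrix (Fin n) (Fin m) ℝ)) * C +
        A * X * -(C * B' * C)) * Xᵀ +
        A * X * C * (0 : Matrix (Fin m) (Fin n) ℝ)) * A +
        A * X * C * Xᵀ * A'))
      = -(Mmat X (S θ₀) * S' * Mmat X (S θ₀)) := by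
    simp only [Mmat, ← hAdef, ← hCdef, hA'def, hB'def]
    simp only [Matrix.mul_zero, Matrix.zero_mul, Matrix.mul_neg, Matrix.neg_mul,
      add_zero, zero_add, Matrix.mul_sub, Matrix.sub_mul,
      Matrix.mul_add, Matrix.add_mul, neg_neg, Matrix.mul_assoc, neg_sub,
      sub_eq_add_neg, neg_add]
    abel
  intro i j
  rw [← key]
  exact hM i j
end

section
/- If Σ(θ) = Σ₀ + θ·D is an affine function of the scalar parameter θ (with D a fixed symmetric matrix and Σ(θ) positive definite on an interval), then the k-th derivative of M(θ) := Σ(θ)⁻¹ - Σ(θ)⁻¹X(XᵀΣ(θ)⁻¹X)⁻¹XᵀΣ(θ)⁻¹ is given by d^k M / dθ^k = (-1)^k · k! · M·(D·M)^k. -/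
open Matrix

attribute [local instance] Matrix.linftyOpNormedRing Matrix.linftyOpNormedAlgebra

section aux

variable {n m : ℕ} (X : Matrix (Fin n) (Fin m) ℝ) (S₀ D : Matrix (Fin n) (Fin n) ℝ)

/-- sandwiching as a continuous linear map -/
noncomputable def sandwich (p q r : ℕ) (P : Matrix (Fin p) (Fin q) ℝ)
    (Q : Matrix (Fin q) (Fin r) ℝ) :
    Matrix (Fin q) (Fin q) ℝ →L[ℝ] Matrix (Fin p) (Fin r) ℝ :=
  LinearMap.toContinuousLinearMap
    { toFun := fun M => P * M * Q
      map_add' := by intro a b; simp [Matrix.mul_add, Matrix.add_mul]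
      map_smul' := by intro c a; simp [Matrix.mul_smul, Matrix.smul_mul] }

@[simp] lemma sandwich_apply (p q r : ℕ) (P : Matrix (Fin p) (Fin q) ℝ)
    (Q : Matrix (Fin q) (Fin r) ℝ) (M : Matrix (Fin q) (Fin q) ℝ) :
    sandwich p q r P Q M = P * M * Q := rfl

set_option maxHeartbeats 1000000 in
lemma alg_id {n m : ℕ} (a d : Matrix (Fin n) (Fin n) ℝ) (X : Matrix (Fin n) (Fin m) ℝ)
    (b : Matrix (Fin m) (Fin m) ℝ) :
    -((a - a * (X * b * Xᵀ) * a) * d * (a - a * (X * b * Xᵀ) * a)) =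
      -(a * d * a) - (((-(a * d * a)) * (X * b * Xᵀ)
          + a * (X * (-(b * (Xᵀ * (-(a * d * a)) * X) * b)) * Xᵀ)) * a
        + a * (X * b * Xᵀ) * (-(a * d * a))) := by
  simp only [Matrix.mul_sub, Matrix.sub_mul, Matrix.mul_neg, Matrix.neg_mul, Matrix.mul_assoc,
    neg_neg, neg_sub, Matrix.add_mul, Matrix.mul_add]
  abel

lemma deriv_step {n : ℕ} (M d : Matrix (Fin n) (Fin n) ℝ) (k : ℕ) :
    (-((k : ℝ) + 1 + 1)) • (M * (d * M) ^ (k + 1 + 1))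
      = (-((k : ℝ) + 1)) • (M * (d * M) ^ (k + 1)) * (d * M)
        + M * (d * M) ^ k * (d * -(M * d * M)) := by
  have h1 : M * (d * M) ^ k * (d * (M * d * M)) = M * (d * M) ^ (k + 1) * (d * M) := by
    rw [pow_succ]; simp [Matrix.mul_assoc]
  have h2 : M * (d * M) ^ (k + 1 + 1) = M * (d * M) ^ (k + 1) * (d * M) := by
    rw [pow_succ, ← Matrix.mul_assoc]
  rw [h2]
  simp only [Matrix.mul_neg]
  rw [h1, smul_mul_assoc]
  match_scalars <;> ring

set_option maxHeartbeats 1000000 in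
lemma key_deriv (s : Set ℝ)
    (hpos : ∀ θ ∈ s, (S₀ + θ • D).PosDef)
    (hinv : ∀ θ ∈ s, IsUnit (Xᵀ * (S₀ + θ • D)⁻¹ * X).det)
    {θ : ℝ} (hθ : θ ∈ s) :
    HasDerivAt (fun t => Mmat X (S₀ + t • D))
      (-(Mmat X (S₀ + θ • D) * D * Mmat X (S₀ + θ • D))) θ := by
  classical
  set S : Matrix (Fin n) (Fin n) ℝ := S₀ + θ • D with hS
  have hSu : IsUnit S := (hpos θ hθ).isUnit
  have hWu : IsUnit (Xᵀ * S⁻¹ * X) := (isUnit_iff_isUnit_det _).2 (hinv θ hθ)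
  -- derivative of t ↦ S₀ + t • D
  have h1 : HasDerivAt (fun t : ℝ => S₀ + t • D) D θ := by
    have := ((hasDerivAt_id' θ).smul_const D).const_add S₀
    simp only [one_smul] at this
    exact this
  -- derivative of the inverse
  have h2 : HasDerivAt (fun t : ℝ => (S₀ + t • D)⁻¹) (-(S⁻¹ * D * S⁻¹)) θ := by
    have := (hasFDerivAt_ringInverse (𝕜 := ℝ) hSu.unit).comp_hasDerivAt θ h1
    simp only [Function.comp_def] at this
    have e : ∀ t : ℝ, Ring.inverse (S₀ + t • D) = (S₀ + t • D)⁻¹ := fun t =>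
      (Matrix.nonsing_inv_eq_ringInverse _).symm
    simp only [e] at this
    refine this.congr_deriv ?_
    simp [ContinuousLinearMap.mulLeftRight_apply, ← Matrix.coe_units_inv hSu.unit,
      IsUnit.unit_spec, Matrix.mul_assoc]
  -- derivative of W t = Xᵀ (S₀+tD)⁻¹ X
  have h3 : HasDerivAt (fun t : ℝ => Xᵀ * (S₀ + t • D)⁻¹ * X)
      (Xᵀ * (-(S⁻¹ * D * S⁻¹)) * X) θ := by
    have := (sandwich m n m Xᵀ X).hasFDerivAt.comp_hasDerivAt θ h2
    exact this
  -- derivative of B t = (W t)⁻¹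
  have h4 : HasDerivAt (fun t : ℝ => (Xᵀ * (S₀ + t • D)⁻¹ * X)⁻¹)
      (-((Xᵀ * S⁻¹ * X)⁻¹ * (Xᵀ * (-(S⁻¹ * D * S⁻¹)) * X) * (Xᵀ * S⁻¹ * X)⁻¹)) θ := by
    have := (hasFDerivAt_ringInverse (𝕜 := ℝ) hWu.unit).comp_hasDerivAt θ h3
    simp only [Function.comp_def] at this
    have e : ∀ t : ℝ, Ring.inverse (Xᵀ * (S₀ + t • D)⁻¹ * X) = (Xᵀ * (S₀ + t • D)⁻¹ * X)⁻¹ :=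
      fun t => (Matrix.nonsing_inv_eq_ringInverse _).symm
    simp only [e] at this
    refine this.congr_deriv ?_
    simp [ContinuousLinearMap.mulLeftRight_apply, ← Matrix.coe_units_inv hWu.unit,
      IsUnit.unit_spec, Matrix.mul_assoc]
  -- derivative of C t = X * B t * Xᵀ
  have h5 : HasDerivAt (fun t : ℝ => X * (Xᵀ * (S₀ + t • D)⁻¹ * X)⁻¹ * Xᵀ)
      (X * (-((Xᵀ * S⁻¹ * X)⁻¹ * (Xᵀ * (-(S⁻¹ * D * S⁻¹)) * X) * (Xᵀ * S⁻¹ * X)⁻¹)) * Xᵀ) θ := by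
    have := (sandwich n m n X Xᵀ).hasFDerivAt.comp_hasDerivAt θ h4
    exact this
  -- now assemble
  have hM : ∀ t : ℝ, Mmat X (S₀ + t • D) =
      (S₀ + t • D)⁻¹ - (S₀ + t • D)⁻¹ * (X * (Xᵀ * (S₀ + t • D)⁻¹ * X)⁻¹ * Xᵀ) * (S₀ + t • D)⁻¹ := by
    intro t; simp [Mmat, Matrix.mul_assoc]
  have h6 := h2.sub ((h2.mul h5).mul h2)
  rw [show (fun t : ℝ => Mmat X (S₀ + t • D)) = fun t =>
      (S₀ + t • D)⁻¹ - (S₀ + t • D)⁻¹ * (X * (Xᵀ * (S₀ + t • D)⁻¹ * X)⁻¹ * Xᵀ) * (S₀ + t • D)⁻¹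
    from funext hM, hM θ, alg_id]
  exact h6

/-- derivative of `M (D M)^k`. -/
lemma pow_deriv (s : Set ℝ)
    (hpos : ∀ θ ∈ s, (S₀ + θ • D).PosDef)
    (hinv : ∀ θ ∈ s, IsUnit (Xᵀ * (S₀ + θ • D)⁻¹ * X).det)
    (k : ℕ) {θ : ℝ} (hθ : θ ∈ s) :
    HasDerivAt (fun t => Mmat X (S₀ + t • D) * (D * Mmat X (S₀ + t • D)) ^ k)
      ((-((k : ℝ) + 1)) •
        (Mmat X (S₀ + θ • D) * (D * Mmat X (S₀ + θ • D)) ^ (k + 1))) θ := by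
  classical
  have hkey := key_deriv X S₀ D s hpos hinv hθ
  induction k with
  | zero =>
      simp only [pow_zero, Matrix.mul_one, pow_one, Nat.cast_zero]
      convert hkey using 1
      simp [Matrix.mul_assoc]
  | succ k ih =>
      have hDF : HasDerivAt (fun t => D * Mmat X (S₀ + t • D))
          (D * -(Mmat X (S₀ + θ • D) * D * Mmat X (S₀ + θ • D))) θ :=
        hkey.const_mul D
      have hprod := ih.mul hDF
      have hfun : (fun t => Mmat X (S₀ + t • D) * (D * Mmat X (S₀ + t • D)) ^ (k + 1))
          = fun t : ℝ => Mmat X (S₀ + t • D) * (D * Mmat X (S₀ + t • D)) ^ k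
              * (D * Mmat X (S₀ + t • D)) :=
        funext fun t => by rw [pow_succ, ← Matrix.mul_assoc]
      rw [hfun]
      refine hprod.congr_deriv ?_
      push_cast
      exact (deriv_step _ _ _).symm

end aux

theorem iterated_deriv_M {n m : ℕ} (X : Matrix (Fin n) (Fin m) ℝ) (hX : X.rank = m)
    (S₀ D : Matrix (Fin n) (Fin n) ℝ) (hS₀ : S₀.IsSymm) (hD : D.IsSymm)
    (s : Set ℝ) (hs : IsOpen s)
    (hpos : ∀ θ ∈ s, (S₀ + θ • D).PosDef)
    (hinv : ∀ θ ∈ s, IsUnit (Xᵀ * (S₀ + θ • D)⁻¹ * X).det)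
    (k : ℕ) :
    ∀ θ ∈ s, ∀ i j,
      iteratedDerivWithin k (fun θ => Mmat X (S₀ + θ • D) i j) s θ
        = ((((-1 : ℝ) ^ k * (k.factorial : ℝ)) •
            (Mmat X (S₀ + θ • D) * (D * Mmat X (S₀ + θ • D)) ^ k)) : Matrix (Fin n) (Fin n) ℝ) i j := by
  induction k with
  | zero =>
      intro θ hθ i j
      simp [iteratedDerivWithin_zero]
  | succ k ih =>
      intro θ hθ i j
      rw [iteratedDerivWithin_succ,
        derivWithin_of_isOpen hs hθ]
      have hev : iteratedDerivWithin k (fun θ => Mmat X (S₀ + θ • D) i j) s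
          =ᶠ[nhds θ] fun t => ((-1 : ℝ) ^ k * (k.factorial : ℝ))
            * (Mmat X (S₀ + t • D) * (D * Mmat X (S₀ + t • D)) ^ k) i j := by
        filter_upwards [hs.mem_nhds hθ] with t ht
        rw [ih t ht i j, Matrix.smul_apply, smul_eq_mul]
      rw [hev.deriv_eq]
      have hg := pow_deriv X S₀ D s hpos hinv k hθ
      have hE : HasDerivAt
          (fun t => (Mmat X (S₀ + t • D) * (D * Mmat X (S₀ + t • D)) ^ k) i j)
          (((-((k : ℝ) + 1)) •
            (Mmat X (S₀ + θ • D) * (D * Mmat X (S₀ + θ • D)) ^ (k + 1))) i j) θ := by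
        have := ((Matrix.entryLinearMap ℝ ℝ i j).toContinuousLinearMap.hasFDerivAt.comp_hasDerivAt
            θ hg)
        exact this
      have hE2 := hE.const_mul ((-1 : ℝ) ^ k * (k.factorial : ℝ))
      rw [hE2.deriv, Matrix.smul_apply, Matrix.smul_apply, smul_eq_mul, smul_eq_mul]
      push_cast [Nat.factorial_succ, pow_succ]
      ring
end

section
/- If the nonzero eigenvalues ψ_{m+1}, ..., ψ_n of M₁ are not all equal, then the matrix G := (trace(M₁)/(n-m))·M₁ - M₁² is sign-indefinite, i.e., it has both a strictly positive and a strictly negative eigenvalue; if the nonzero eigenvalues are all equal, then G = 0. -/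
open Matrix

lemma aux_negSemidef {N : ℕ} {A : Matrix (Fin N) (Fin N) ℝ} (hA : A.IsHermitian)
    (h : ∀ i, hA.eigenvalues i ≤ 0) : (-A).PosSemidef := by
  have hsp := hA.spectral_theorem
  simp only [RCLike.ofReal_real_eq_id, Function.id_comp] at hsp
  have hneg : -A = (hA.eigenvectorUnitary : Matrix (Fin N) (Fin N) ℝ) *
      diagonal (fun i => - hA.eigenvalues i) *
      star (hA.eigenvectorUnitary : Matrix (Fin N) (Fin N) ℝ) := by
    conv_lhs => rw [hsp, Unitary.conjStarAlgAut_apply]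
    rw [← Matrix.diagonal_neg]
    noncomm_ring
  rw [hneg]
  have hd : (diagonal (fun i => - hA.eigenvalues i)).PosSemidef :=
    posSemidef_diagonal_iff.mpr (fun i => neg_nonneg.mpr (h i))
  simpa [Matrix.star_eq_conjTranspose] using hd.mul_mul_conjTranspose_same
    (hA.eigenvectorUnitary : Matrix (Fin N) (Fin N) ℝ)

theorem G_sign_indefinite {n m : ℕ} (hmn : m < n)
    (K : Matrix (Fin n) (Fin n) ℝ) (hK : K.PosDef)
    (X : Matrix (Fin n) (Fin m) ℝ) (hX : X.rank = m)
    (hinv : IsUnit (Xᵀ * K⁻¹ * X).det)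
    (M₁ G : Matrix (Fin n) (Fin n) ℝ)
    (hM₁ : M₁ = K⁻¹ - K⁻¹ * X * (Xᵀ * K⁻¹ * X)⁻¹ * Xᵀ * K⁻¹)
    (hGdef : G = (M₁.trace / ((n : ℝ) - m)) • M₁ - M₁ ^ 2)
    (hH : M₁.IsHermitian) (hGH : G.IsHermitian) :
    (¬ (∀ i j, hH.eigenvalues i ≠ 0 → hH.eigenvalues j ≠ 0 →
          hH.eigenvalues i = hH.eigenvalues j) →
        (∃ i, 0 < hGH.eigenvalues i) ∧ (∃ j, hGH.eigenvalues j < 0)) ∧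
    ((∀ i j, hH.eigenvalues i ≠ 0 → hH.eigenvalues j ≠ 0 →
          hH.eigenvalues i = hH.eigenvalues j) → G = 0) := by
  classical
  have hKdet : IsUnit K.det := isUnit_iff_ne_zero.mpr hK.det_pos.ne'
  have hKK : K⁻¹ * K = 1 := nonsing_inv_mul K hKdet
  have hKK' : K * K⁻¹ = 1 := mul_nonsing_inv K hKdet
  have hSS : (Xᵀ * (K⁻¹ * X))⁻¹ * (Xᵀ * (K⁻¹ * X)) = 1 :=
    nonsing_inv_mul _ (by rwa [← Matrix.mul_assoc])
  -- M₁ * X = 0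
  have hMX : M₁ * X = 0 := by
    rw [hM₁, Matrix.sub_mul]
    simp only [Matrix.mul_assoc]
    rw [hSS, Matrix.mul_one, sub_self]
  -- K * M₁
  have hKM : K * M₁ = 1 - X * ((Xᵀ * K⁻¹ * X)⁻¹ * (Xᵀ * K⁻¹)) := by
    rw [hM₁, Matrix.mul_sub, hKK']
    congr 1
    simp only [← Matrix.mul_assoc]
    rw [hKK', Matrix.one_mul]
  -- kernel of M₁ equals range of X
  have hker : LinearMap.ker M₁.mulVecLin = LinearMap.range X.mulVecLin := by
    ext v
    simp only [LinearMap.mem_ker, LinearMap.mem_range, Matrix.mulVecLin_apply]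
    constructor
    · intro hv
      refine ⟨((Xᵀ * K⁻¹ * X)⁻¹ * (Xᵀ * K⁻¹)) *ᵥ v, ?_⟩
      have h1 : (K * M₁) *ᵥ v = 0 := by
        rw [← Matrix.mulVec_mulVec, hv, Matrix.mulVec_zero]
      rw [hKM, Matrix.sub_mulVec, Matrix.one_mulVec, sub_eq_zero] at h1
      rw [Matrix.mulVec_mulVec, ← h1]
    · rintro ⟨u, rfl⟩
      rw [Matrix.mulVec_mulVec, hMX, Matrix.zero_mulVec]
  -- rank of M₁ is n - m
  have hrank : M₁.rank = n - m := by
    have h1 := LinearMap.finrank_range_add_finrank_ker M₁.mulVecLin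
    rw [hker] at h1
    have h2 : Module.finrank ℝ (LinearMap.range X.mulVecLin) = m := hX
    rw [h2] at h1
    have h3 : Module.finrank ℝ (Fin n → ℝ) = n := by simp
    rw [h3] at h1
    have : M₁.rank = Module.finrank ℝ (LinearMap.range M₁.mulVecLin) := rfl
    omega
  -- M₁ is PSD
  have hMKM : M₁ * K * M₁ = M₁ := by
    rw [Matrix.mul_assoc, hKM, Matrix.mul_sub, Matrix.mul_one, ← Matrix.mul_assoc, hMX,
      Matrix.zero_mul, sub_zero]
  have hPSD : M₁.PosSemidef := by
    have h := hK.posSemidef.conjTranspose_mul_mul_same M₁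
    rwa [hH.eq, hMKM] at h
  set ψ : Fin n → ℝ := hH.eigenvalues with hψ
  have hnonneg : ∀ i, 0 ≤ ψ i := hPSD.eigenvalues_nonneg
  set T : Finset (Fin n) := Finset.univ.filter (fun i => ψ i ≠ 0) with hT
  have hcardT : T.card = n - m := by
    have h1 := hH.rank_eq_card_non_zero_eigs
    rw [Fintype.card_subtype] at h1
    rw [hT, ← h1, hrank]
  have hNR : ((n : ℝ) - m) = ((n - m : ℕ) : ℝ) := (Nat.cast_sub hmn.le).symm
  have hNpos : (0 : ℝ) < (n : ℝ) - m := by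
    have : (m : ℝ) < n := by exact_mod_cast hmn
    linarith
  set V := (hH.eigenvectorUnitary : Matrix (Fin n) (Fin n) ℝ) with hV
  have hVV : star V * V = 1 := mem_unitaryGroup_iff'.mp hH.eigenvectorUnitary.2
  have hsp : M₁ = V * diagonal ψ * star V := by
    have h1 := hH.spectral_theorem
    simp only [RCLike.ofReal_real_eq_id, Function.id_comp] at h1
    exact h1
  have htrace : M₁.trace = ∑ i ∈ T, ψ i := by
    have h1 : M₁.trace = ∑ i, ψ i := by
      conv_lhs => rw [hsp]
      rw [Matrix.trace_mul_cycle, hVV, Matrix.one_mul, Matrix.trace_diagonal]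
    rw [h1, hT, Finset.sum_filter_ne_zero]
  set c : ℝ := M₁.trace / ((n : ℝ) - m) with hc
  -- c times eigenvalue facts
  have hGv : ∀ i, G *ᵥ ⇑(hH.eigenvectorBasis i) =
      (c * ψ i - ψ i * ψ i) • ⇑(hH.eigenvectorBasis i) := by
    intro i
    rw [hGdef, pow_two, Matrix.sub_mulVec, Matrix.smul_mulVec, ← Matrix.mulVec_mulVec,
      hH.mulVec_eigenvectorBasis, Matrix.mulVec_smul, hH.mulVec_eigenvectorBasis,
      smul_smul, smul_smul, ← sub_smul]
  have hvpos : ∀ i, (0:ℝ) < ⇑(hH.eigenvectorBasis i) ⬝ᵥ ⇑(hH.eigenvectorBasis i) := by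
    intro i
    have hne0 : (⇑(hH.eigenvectorBasis i) : Fin n → ℝ) ≠ 0 :=
      fun h => hH.eigenvectorBasis.orthonormal.ne_zero i (by ext j; exact congrFun h j)
    have := dotProduct_self_star_pos_iff (v := (⇑(hH.eigenvectorBasis i) : Fin n → ℝ)).mpr hne0
    simpa using this
  have hquad : ∀ i, (⇑(hH.eigenvectorBasis i) : Fin n → ℝ) ⬝ᵥ (G *ᵥ ⇑(hH.eigenvectorBasis i)) =
      (c * ψ i - ψ i * ψ i) * (⇑(hH.eigenvectorBasis i) ⬝ᵥ ⇑(hH.eigenvectorBasis i)) := by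
    intro i
    rw [hGv i, dotProduct_smul, smul_eq_mul]
  constructor
  · -- not all equal : indefinite
    intro hne
    push_neg at hne
    obtain ⟨i₀, j₀, hi₀, hj₀, hij⟩ := hne
    have hi₀T : i₀ ∈ T := Finset.mem_filter.mpr ⟨Finset.mem_univ _, hi₀⟩
    have hj₀T : j₀ ∈ T := Finset.mem_filter.mpr ⟨Finset.mem_univ _, hj₀⟩
    obtain ⟨a, haT, hamin⟩ := T.exists_min_image ψ ⟨i₀, hi₀T⟩
    obtain ⟨b, hbT, hbmax⟩ := T.exists_max_image ψ ⟨i₀, hi₀T⟩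
    have hapos : 0 < ψ a :=
      lt_of_le_of_ne (hnonneg a) (Ne.symm (Finset.mem_filter.mp haT).2)
    have hbpos : 0 < ψ b :=
      lt_of_le_of_ne (hnonneg b) (Ne.symm (Finset.mem_filter.mp hbT).2)
    have hlt1 : (T.card : ℝ) * ψ a < ∑ j ∈ T, ψ j := by
      have hw : ∃ j ∈ T, ψ a < ψ j := by
        by_cases hia : ψ i₀ = ψ a
        · exact ⟨j₀, hj₀T, lt_of_le_of_ne (hamin j₀ hj₀T) (fun h => hij (hia.trans h))⟩
        · exact ⟨i₀, hi₀T, lt_of_le_of_ne (hamin i₀ hi₀T) (Ne.symm hia)⟩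
      have := Finset.sum_lt_sum (f := fun _ => ψ a) (g := ψ)
        (fun j hj => hamin j hj) (by obtain ⟨j, hj, hjj⟩ := hw; exact ⟨j, hj, hjj⟩)
      rwa [Finset.sum_const, nsmul_eq_mul] at this
    have hlt2 : ∑ j ∈ T, ψ j < (T.card : ℝ) * ψ b := by
      have hw : ∃ j ∈ T, ψ j < ψ b := by
        by_cases hib : ψ i₀ = ψ b
        · exact ⟨j₀, hj₀T, lt_of_le_of_ne (hbmax j₀ hj₀T) (fun h => hij ((h.trans hib.symm) ▸ rfl))⟩
        · exact ⟨i₀, hi₀T, lt_of_le_of_ne (hbmax i₀ hi₀T) hib⟩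
      have := Finset.sum_lt_sum (f := ψ) (g := fun _ => ψ b)
        (fun j hj => hbmax j hj) (by obtain ⟨j, hj, hjj⟩ := hw; exact ⟨j, hj, hjj⟩)
      rwa [Finset.sum_const, nsmul_eq_mul] at this
    have hcardR : (T.card : ℝ) = (n : ℝ) - m := by rw [hcardT, ← hNR]
    have hca : ψ a < c := by
      rw [hc, htrace, lt_div_iff₀ hNpos]
      calc ψ a * ((n:ℝ) - m) = (T.card : ℝ) * ψ a := by rw [hcardR]; ring
        _ < ∑ j ∈ T, ψ j := hlt1
    have hcb : c < ψ b := by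
      rw [hc, htrace, div_lt_iff₀ hNpos]
      calc (∑ j ∈ T, ψ j) < (T.card : ℝ) * ψ b := hlt2
        _ = ψ b * ((n:ℝ) - m) := by rw [hcardR]; ring
    constructor
    · by_contra hpos
      push_neg at hpos
      have hns := aux_negSemidef hGH hpos
      have h2 := hns.dotProduct_mulVec_nonneg (⇑(hH.eigenvectorBasis a))
      simp only [star_trivial, Matrix.neg_mulVec, dotProduct_neg, le_neg, neg_zero] at h2
      have h3 : 0 < (⇑(hH.eigenvectorBasis a) : Fin n → ℝ) ⬝ᵥ (G *ᵥ ⇑(hH.eigenvectorBasis a)) := by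
        rw [hquad a]
        exact mul_pos (by nlinarith) (hvpos a)
      linarith
    · by_contra hneg
      push_neg at hneg
      have hps := hGH.posSemidef_iff_eigenvalues_nonneg.mpr hneg
      have h2 := hps.dotProduct_mulVec_nonneg (⇑(hH.eigenvectorBasis b))
      simp only [star_trivial] at h2
      have h3 : (⇑(hH.eigenvectorBasis b) : Fin n → ℝ) ⬝ᵥ (G *ᵥ ⇑(hH.eigenvectorBasis b)) < 0 := by
        rw [hquad b]
        exact mul_neg_of_neg_of_pos (by nlinarith) (hvpos b)
      linarith
  · -- all nonzero eigenvalues equal : G = 0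
    intro hall
    have hzero : ∀ i, c * ψ i - ψ i * ψ i = 0 := by
      intro i
      by_cases hi : ψ i = 0
      · simp [hi]
      · have hiT : i ∈ T := Finset.mem_filter.mpr ⟨Finset.mem_univ _, hi⟩
        have hsum : ∑ j ∈ T, ψ j = (T.card : ℝ) * ψ i := by
          rw [Finset.sum_congr rfl (fun j hj => hall j i (Finset.mem_filter.mp hj).2 hi),
            Finset.sum_const, nsmul_eq_mul]
        have hcval : c = ψ i := by
          rw [hc, htrace, hsum, hcardT, ← hNR]
          exact mul_div_cancel_left₀ _ hNpos.ne'
        rw [hcval]; ring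
    have hDD : (V * diagonal ψ * star V) * (V * diagonal ψ * star V) =
        V * diagonal (fun i => ψ i * ψ i) * star V := by
      simp only [Matrix.mul_assoc]
      rw [← Matrix.mul_assoc (star V) V (diagonal ψ * star V), hVV, Matrix.one_mul,
        ← Matrix.mul_assoc (diagonal ψ) (diagonal ψ) (star V), Matrix.diagonal_mul_diagonal]
    have hsm : c • (V * diagonal ψ * star V) = V * diagonal (fun i => c * ψ i) * star V := by
      have h0 : (fun i => c * ψ i) = c • ψ := rfl
      rw [h0, Matrix.diagonal_smul, mul_smul_comm, smul_mul_assoc]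
    have hGspec : G = V * diagonal (fun i => c * ψ i - ψ i * ψ i) * star V := by
      rw [hGdef, pow_two]
      conv_lhs => rw [hsp]
      rw [hDD, hsm, ← Matrix.sub_mul, ← Matrix.mul_sub, Matrix.diagonal_sub]
    rw [hGspec]
    have : (fun i => c * ψ i - ψ i * ψ i) = fun _ => (0:ℝ) := funext hzero
    rw [this]
    simp
end

section
/- The largest eigenvalue of M₁ = K_η⁻¹P_η is at most (λ₁ + η)⁻¹ and the smallest nonzero eigenvalue of M₁ is at least (λ_n + η)⁻¹, where λ₁ and λ_n are the smallest and largest eigenvalues of K. -/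
open Matrix

lemma quad_sum {n : ℕ} {A : Matrix (Fin n) (Fin n) ℝ} (hA : A.IsHermitian) (v : Fin n → ℝ) :
    v ⬝ᵥ A *ᵥ v = ∑ i, hA.eigenvalues i *
      ((star (hA.eigenvectorUnitary : Matrix (Fin n) (Fin n) ℝ) *ᵥ v) i)^2 ∧
    v ⬝ᵥ v = ∑ i, ((star (hA.eigenvectorUnitary : Matrix (Fin n) (Fin n) ℝ) *ᵥ v) i)^2 := by
  set U := (hA.eigenvectorUnitary : Matrix (Fin n) (Fin n) ℝ) with hU
  have hUU : U * star U = 1 := (Matrix.mem_unitaryGroup_iff).mp hA.eigenvectorUnitary.2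
  set w := star U *ᵥ v with hw
  constructor
  · conv_lhs => rw [hA.spectral_theorem, Unitary.conjStarAlgAut_apply]
    rw [← mulVec_mulVec, ← mulVec_mulVec, dotProduct_mulVec, ← mulVec_transpose]
    have hsU : Uᵀ = star U := rfl
    rw [hsU, ← hw]
    simp only [dotProduct, mulVec_diagonal, Function.comp_apply, RCLike.ofReal_real_eq_id, id_eq, pow_two]
    exact Finset.sum_congr rfl fun i _ => by ring
  · calc v ⬝ᵥ v = v ⬝ᵥ (U * star U) *ᵥ v := by rw [hUU, one_mulVec]
    _ = ∑ i, (w i)^2 := by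
        rw [← mulVec_mulVec, dotProduct_mulVec, ← mulVec_transpose]
        have hsU : Uᵀ = star U := rfl
        rw [hsU, ← hw]
        simp [dotProduct, pow_two]

lemma rayleigh_ge {n : ℕ} {A : Matrix (Fin n) (Fin n) ℝ} (hA : A.IsHermitian) {a : ℝ}
    (h : ∀ i, a ≤ hA.eigenvalues i) (v : Fin n → ℝ) : a * (v ⬝ᵥ v) ≤ v ⬝ᵥ A *ᵥ v := by
  obtain ⟨h1, h2⟩ := quad_sum hA v
  rw [h1, h2, Finset.mul_sum]
  exact Finset.sum_le_sum fun i _ => mul_le_mul_of_nonneg_right (h i) (sq_nonneg _)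

lemma rayleigh_le {n : ℕ} {A : Matrix (Fin n) (Fin n) ℝ} (hA : A.IsHermitian) {b : ℝ}
    (h : ∀ i, hA.eigenvalues i ≤ b) (v : Fin n → ℝ) : v ⬝ᵥ A *ᵥ v ≤ b * (v ⬝ᵥ v) := by
  obtain ⟨h1, h2⟩ := quad_sum hA v
  rw [h1, h2, Finset.mul_sum]
  exact Finset.sum_le_sum fun i _ => mul_le_mul_of_nonneg_right (h i) (sq_nonneg _)

lemma inv_quad_le {n : ℕ} {A : Matrix (Fin n) (Fin n) ℝ} (hA : A.PosDef) {c : ℝ} (hc : 0 < c)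
    (h : ∀ w, c * (w ⬝ᵥ w) ≤ w ⬝ᵥ A *ᵥ w) (v : Fin n → ℝ) :
    v ⬝ᵥ A⁻¹ *ᵥ v ≤ c⁻¹ * (v ⬝ᵥ v) := by
  have hdet : IsUnit A.det := hA.det_pos.ne'.isUnit
  set w := A⁻¹ *ᵥ v with hw
  have hAw : A *ᵥ w = v := by
    rw [hw, mulVec_mulVec, Matrix.mul_nonsing_inv _ hdet, one_mulVec]
  have ht0 : 0 ≤ v ⬝ᵥ w := by
    have := hA.posSemidef.inv.dotProduct_mulVec_nonneg v
    simpa using this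
  set t := v ⬝ᵥ w with htdef
  have hCS : t^2 ≤ (v ⬝ᵥ v) * (w ⬝ᵥ w) := by
    rw [htdef]
    simpa [dotProduct, pow_two] using Finset.sum_mul_sq_le_sq_mul_sq Finset.univ v w
  have hwAw : w ⬝ᵥ A *ᵥ w = t := by
    rw [hAw, htdef, dotProduct_comm]
  have hkey : t^2 * c ≤ (v ⬝ᵥ v) * t := by
    have h2 : c * (w ⬝ᵥ w) ≤ t := by rw [← hwAw]; exact h w
    have hvv : 0 ≤ v ⬝ᵥ v := by
      simpa [dotProduct] using Finset.sum_nonneg fun i (_ : i ∈ Finset.univ) => mul_self_nonneg (v i)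
    have hww : 0 ≤ w ⬝ᵥ w := by
      simpa [dotProduct] using Finset.sum_nonneg fun i (_ : i ∈ Finset.univ) => mul_self_nonneg (w i)
    nlinarith
  have hvv : 0 ≤ v ⬝ᵥ v := by
    simpa [dotProduct] using Finset.sum_nonneg fun i (_ : i ∈ Finset.univ) => mul_self_nonneg (v i)
  have hci : c * c⁻¹ = 1 := mul_inv_cancel₀ hc.ne'
  rcases eq_or_lt_of_le ht0 with h0 | h0
  · rw [← h0]
    exact mul_nonneg (inv_nonneg.mpr hc.le) hvv
  · have h1 : t * c ≤ v ⬝ᵥ v := by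
      have h2 : t * (t * c) ≤ t * (v ⬝ᵥ v) := by nlinarith [hkey]
      exact le_of_mul_le_mul_left h2 h0
    calc t = t * c * c⁻¹ := by rw [mul_assoc, hci, mul_one]
      _ ≤ (v ⬝ᵥ v) * c⁻¹ := mul_le_mul_of_nonneg_right h1 (inv_nonneg.mpr hc.le)
      _ = c⁻¹ * (v ⬝ᵥ v) := mul_comm _ _

lemma dot_shift {a b : ℕ} (P : Matrix (Fin a) (Fin b) ℝ) (z : Fin a → ℝ) (y : Fin b → ℝ) :
    z ⬝ᵥ P *ᵥ y = (Pᵀ *ᵥ z) ⬝ᵥ y := by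
  rw [dotProduct_mulVec, ← mulVec_transpose]

theorem M1_eigenvalue_bounds {n m : ℕ} (hmn : m < n)
    (K : Matrix (Fin n) (Fin n) ℝ) (hKpd : K.PosDef)
    (η : ℝ) (hη : 0 ≤ η)
    (X : Matrix (Fin n) (Fin m) ℝ) (hX : X.rank = m)
    (hinv : IsUnit (Xᵀ * (K + η • 1)⁻¹ * X).det)
    (M₁ : Matrix (Fin n) (Fin n) ℝ)
    (hM₁ : M₁ = (K + η • 1)⁻¹
      - (K + η • 1)⁻¹ * X * (Xᵀ * (K + η • 1)⁻¹ * X)⁻¹ * Xᵀ * (K + η • 1)⁻¹)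
    (hH : M₁.IsHermitian)
    (lam1 lamn : ℝ)
    (hlam1 : (∀ i, lam1 ≤ hKpd.1.eigenvalues i) ∧ ∃ i, hKpd.1.eigenvalues i = lam1)
    (hlamn : (∀ i, hKpd.1.eigenvalues i ≤ lamn) ∧ ∃ i, hKpd.1.eigenvalues i = lamn) :
    ∀ i, hH.eigenvalues i ≤ (lam1 + η)⁻¹ ∧
      (hH.eigenvalues i ≠ 0 → (lamn + η)⁻¹ ≤ hH.eigenvalues i) := by
  intro i
  -- K + η•1 is positive definite
  have hsm : (η • (1 : Matrix (Fin n) (Fin n) ℝ)).PosSemidef := by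
    refine PosSemidef.of_dotProduct_mulVec_nonneg ?_ fun x => ?_
    · rw [Matrix.IsHermitian, conjTranspose_smul, conjTranspose_one, star_trivial]
    · rw [smul_mulVec, one_mulVec, dotProduct_smul, smul_eq_mul]
      have : (0:ℝ) ≤ star x ⬝ᵥ x := by
        simpa [dotProduct] using Finset.sum_nonneg
          fun j (_ : j ∈ Finset.univ) => mul_self_nonneg (x j)
      exact mul_nonneg hη this
  set Kη := K + η • (1 : Matrix (Fin n) (Fin n) ℝ) with hKηdef
  have hKη : Kη.PosDef := hKpd.add_posSemidef hsm
  have hKdet : IsUnit Kη.det := hKη.det_pos.ne'.isUnit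
  set G := Kη⁻¹ with hGdef
  have hG : G.PosDef := hKη.inv
  have hGsym : Gᵀ = G := by
    have := hG.isHermitian
    rwa [Matrix.IsHermitian, conjTranspose_eq_transpose_of_trivial] at this
  -- eigenvalue positivity
  obtain ⟨i1, hi1⟩ := hlam1.2
  have hlam1pos : 0 < lam1 := hi1 ▸ hKpd.eigenvalues_pos i1
  obtain ⟨i2, hi2⟩ := hlamn.2
  have hlamnpos : 0 < lamn := hi2 ▸ hKpd.eigenvalues_pos i2
  have hl1 : 0 < lam1 + η := by linarith
  have hln : 0 < lamn + η := by linarith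
  -- quadratic bounds for Kη
  have hKηquad : ∀ w : Fin n → ℝ, w ⬝ᵥ Kη *ᵥ w = w ⬝ᵥ K *ᵥ w + η * (w ⬝ᵥ w) := by
    intro w
    rw [hKηdef, add_mulVec, dotProduct_add, smul_mulVec, one_mulVec,
      dotProduct_smul, smul_eq_mul]
  have hq1 : ∀ w : Fin n → ℝ, (lam1 + η) * (w ⬝ᵥ w) ≤ w ⬝ᵥ Kη *ᵥ w := by
    intro w
    have h1 := rayleigh_ge hKpd.1 hlam1.1 w
    rw [hKηquad w]; nlinarith
  have hqn : ∀ w : Fin n → ℝ, w ⬝ᵥ Kη *ᵥ w ≤ (lamn + η) * (w ⬝ᵥ w) := by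
    intro w
    have h1 := rayleigh_le hKpd.1 hlamn.1 w
    rw [hKηquad w]; nlinarith
  have hGle : ∀ v : Fin n → ℝ, v ⬝ᵥ G *ᵥ v ≤ (lam1 + η)⁻¹ * (v ⬝ᵥ v) :=
    inv_quad_le hKη hl1 hq1
  -- A := Xᵀ G X is positive definite
  have hAh : (Xᵀ * G * X).IsHermitian := by
    have h := isHermitian_conjTranspose_mul_mul X hG.isHermitian
    rwa [conjTranspose_eq_transpose_of_trivial] at h
  have hApd : (Xᵀ * G * X).PosDef := by
    refine PosDef.of_dotProduct_mulVec_pos hAh fun x hx => ?_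
    have hXx : X *ᵥ x ≠ 0 := by
      intro hXx0
      apply hx
      have hAx : (Xᵀ * G * X) *ᵥ x = 0 := by
        rw [← mulVec_mulVec, hXx0, mulVec_zero]
      have := congrArg (fun y => (Xᵀ * G * X)⁻¹ *ᵥ y) hAx
      simpa [mulVec_mulVec, Matrix.nonsing_inv_mul _ hinv, one_mulVec, mulVec_zero] using this
    have hrw : star x ⬝ᵥ (Xᵀ * G * X) *ᵥ x = star (X *ᵥ x) ⬝ᵥ G *ᵥ (X *ᵥ x) := by
      rw [star_trivial, star_trivial, ← mulVec_mulVec, ← mulVec_mulVec,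
        dot_shift Xᵀ x, transpose_transpose]
    rw [hrw]
    exact hG.dotProduct_mulVec_pos hXx
  have hAinv : (Xᵀ * G * X)⁻¹.PosSemidef := hApd.inv.posSemidef
  -- the subtracted term is PSD
  have hC : ∀ v : Fin n → ℝ, 0 ≤ v ⬝ᵥ (G * X * (Xᵀ * G * X)⁻¹ * Xᵀ * G) *ᵥ v := by
    intro v
    have hrw : v ⬝ᵥ (G * X * (Xᵀ * G * X)⁻¹ * Xᵀ * G) *ᵥ v
        = (Xᵀ *ᵥ (G *ᵥ v)) ⬝ᵥ (Xᵀ * G * X)⁻¹ *ᵥ (Xᵀ *ᵥ (G *ᵥ v)) := by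
      rw [← mulVec_mulVec, ← mulVec_mulVec, ← mulVec_mulVec, ← mulVec_mulVec,
        dot_shift G v, hGsym, dot_shift X (G *ᵥ v)]
    rw [hrw]
    simpa using hAinv.dotProduct_mulVec_nonneg (Xᵀ *ᵥ (G *ᵥ v))
  -- the key algebraic identity M₁ Kη M₁ = M₁
  set C := G * X * (Xᵀ * G * X)⁻¹ * Xᵀ * G with hCdef
  have hM₁' : M₁ = G - C := hM₁
  have hGKη : G * Kη = 1 := Matrix.nonsing_inv_mul Kη hKdet
  have hKηG : Kη * G = 1 := Matrix.mul_nonsing_inv Kη hKdet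
  have hB : (Xᵀ * G * X)⁻¹ * (Xᵀ * G * X) = 1 := Matrix.nonsing_inv_mul _ hinv
  have c1 : ∀ D : Matrix (Fin n) (Fin n) ℝ, G * (Kη * D) = D := by
    intro D; rw [← Matrix.mul_assoc, hGKη, Matrix.one_mul]
  have c2 : ∀ D : Matrix (Fin m) (Fin n) ℝ,
      (Xᵀ * (G * X))⁻¹ * (Xᵀ * (G * (X * D))) = D := by
    intro D
    have e : Xᵀ * (G * X) = Xᵀ * G * X := (Matrix.mul_assoc _ _ _).symm
    rw [e, show (Xᵀ * G * X)⁻¹ * (Xᵀ * (G * (X * D))) = ((Xᵀ * G * X)⁻¹ * (Xᵀ * G * X)) * D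
      by simp only [Matrix.mul_assoc], hB, Matrix.one_mul]
  have t1 : G * Kη * G = G := by rw [Matrix.mul_assoc]; exact c1 G
  have t2 : G * Kη * C = C := by rw [Matrix.mul_assoc]; exact c1 C
  have t3 : C * Kη * G = C := by
    rw [hCdef]; simp only [Matrix.mul_assoc]; rw [c1]
  have t4 : C * Kη * C = C := by
    rw [hCdef]; simp only [Matrix.mul_assoc]; rw [c1, c2]
  have hMKM : M₁ * Kη * M₁ = M₁ := by
    rw [hM₁']
    have expand : (G - C) * Kη * (G - C)
        = G * Kη * G - G * Kη * C - (C * Kη * G - C * Kη * C) := by noncomm_ring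
    rw [expand, t1, t2, t3, t4]
    abel
  -- eigenvector setup
  set μ := hH.eigenvalues i with hμdef
  set v : Fin n → ℝ := ⇑(hH.eigenvectorBasis i) with hvdef
  have hv : M₁ *ᵥ v = μ • v := hH.mulVec_eigenvectorBasis i
  have hvne : v ≠ 0 := by
    intro h
    exact hH.eigenvectorBasis.orthonormal.ne_zero i (by ext j; exact congrFun h j)
  have hvv : 0 < v ⬝ᵥ v := by
    have := Matrix.dotProduct_star_self_pos_iff (v := v) |>.mpr hvne
    simpa using this
  have hMsym : M₁ᵀ = M₁ := by
    have := hH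
    rwa [Matrix.IsHermitian, conjTranspose_eq_transpose_of_trivial] at this
  have hquad : v ⬝ᵥ M₁ *ᵥ v = μ * (v ⬝ᵥ v) := by
    rw [hv, dotProduct_smul, smul_eq_mul]
  -- upper bound
  have hupper : μ * (v ⬝ᵥ v) ≤ (lam1 + η)⁻¹ * (v ⬝ᵥ v) := by
    rw [← hquad, hM₁', sub_mulVec, dotProduct_sub]
    have h1 := hGle v
    have h2 := hC v
    linarith
  constructor
  · exact le_of_mul_le_mul_right (by simpa [mul_comm] using hupper) hvv
  · intro hμne
    -- lower bound
    have hkey : μ * (v ⬝ᵥ v) = μ^2 * (v ⬝ᵥ Kη *ᵥ v) := by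
      calc μ * (v ⬝ᵥ v) = v ⬝ᵥ M₁ *ᵥ v := hquad.symm
        _ = v ⬝ᵥ (M₁ * Kη * M₁) *ᵥ v := by rw [hMKM]
        _ = (M₁ *ᵥ v) ⬝ᵥ Kη *ᵥ (M₁ *ᵥ v) := by
            rw [← mulVec_mulVec, ← mulVec_mulVec, dot_shift M₁ v, hMsym]
        _ = μ^2 * (v ⬝ᵥ Kη *ᵥ v) := by
            rw [hv, smul_dotProduct, mulVec_smul, dotProduct_smul]
            simp [smul_eq_mul]; ring
    have hq1v := hq1 v
    have hqnv := hqn v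
    have hμsq : 0 < μ^2 := by positivity
    have hge : μ^2 * ((lam1 + η) * (v ⬝ᵥ v)) ≤ μ^2 * (v ⬝ᵥ Kη *ᵥ v) :=
      mul_le_mul_of_nonneg_left hq1v hμsq.le
    have hpos : 0 < μ^2 * ((lam1 + η) * (v ⬝ᵥ v)) := by positivity
    have hμVpos : 0 < μ * (v ⬝ᵥ v) := hkey ▸ lt_of_lt_of_le hpos hge
    have hμpos : 0 < μ := by nlinarith
    have h2 : μ * (v ⬝ᵥ v) ≤ μ^2 * ((lamn + η) * (v ⬝ᵥ v)) := by
      rw [hkey]; exact mul_le_mul_of_nonneg_left hqnv hμsq.le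
    have h3 : (μ * (v ⬝ᵥ v)) * 1 ≤ (μ * (v ⬝ᵥ v)) * (μ * (lamn + η)) := by nlinarith [h2]
    have h1 : 1 ≤ μ * (lamn + η) := le_of_mul_le_mul_left h3 hμVpos
    calc (lamn + η)⁻¹ = (lamn + η)⁻¹ * 1 := (mul_one _).symm
      _ ≤ (lamn + η)⁻¹ * (μ * (lamn + η)) :=
          mul_le_mul_of_nonneg_left h1 (inv_nonneg.mpr hln.le)
      _ = μ := by field_simp
end

section
/- Bound on the derivative of the profile log marginal likelihood: for z ∉ range(X), the quantity |trace(M₁)/(n-m) - (zᵀM₁²z)/(zᵀM₁z)| is at most (λ₁+η)⁻¹ - (λ_n+η)⁻¹, where λ₁ ≤ λ_n are the smallest and largest eigenvalues of K. -/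
open Matrix

lemma psd_trace_nonneg {n : ℕ} {M : Matrix (Fin n) (Fin n) ℝ} (hM : M.PosSemidef) :
    0 ≤ M.trace := by
  rw [Matrix.trace]
  apply Finset.sum_nonneg
  intro i _
  have := hM.dotProduct_mulVec_nonneg (Pi.single i 1)
  simpa [Matrix.mulVec_single, dotProduct, Pi.single_apply, ite_mul, Finset.sum_ite_eq] using this

lemma psd_smul {n : ℕ} {M : Matrix (Fin n) (Fin n) ℝ} (hM : M.PosSemidef) {c : ℝ} (hc : 0 ≤ c) :
    (c • M).PosSemidef := by
  refine ⟨?_, fun x => ?_⟩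
  · unfold Matrix.IsHermitian
    rw [Matrix.conjTranspose_smul, hM.1]
    simp
  · exact (hM.smul hc).2 x

lemma sub_smul_one_psd {n : ℕ} {C : Matrix (Fin n) (Fin n) ℝ}
    (hC : C.IsHermitian) {c : ℝ} (h : ∀ i, c ≤ hC.eigenvalues i) :
    (C - c • 1).PosSemidef := by
  have hU : (hC.eigenvectorUnitary : Matrix (Fin n) (Fin n) ℝ) *
      star (hC.eigenvectorUnitary : Matrix (Fin n) (Fin n) ℝ) = 1 :=
    (Matrix.mem_unitaryGroup_iff).mp hC.eigenvectorUnitary.2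
  have key : C - c • 1 = (hC.eigenvectorUnitary : Matrix (Fin n) (Fin n) ℝ) *
      Matrix.diagonal (fun i => hC.eigenvalues i - c) *
      (hC.eigenvectorUnitary : Matrix (Fin n) (Fin n) ℝ)ᴴ := by
    have : Matrix.diagonal (fun i => hC.eigenvalues i - c)
        = Matrix.diagonal (RCLike.ofReal ∘ hC.eigenvalues) - c • (1 : Matrix (Fin n) (Fin n) ℝ) := by
      rw [Matrix.smul_one_eq_diagonal, Matrix.diagonal_sub]
      rfl
    rw [this, Matrix.mul_sub, Matrix.sub_mul]
    conv_lhs => rw [hC.spectral_theorem]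
    congr 1
    rw [Matrix.mul_smul, Matrix.smul_mul, mul_one]
    change _ = c • ((hC.eigenvectorUnitary : Matrix (Fin n) (Fin n) ℝ) *
      star (hC.eigenvectorUnitary : Matrix (Fin n) (Fin n) ℝ))
    rw [hU]
  rw [key]
  exact (Matrix.PosSemidef.diagonal (fun i => sub_nonneg.mpr (h i))).mul_mul_conjTranspose_same _

lemma smul_one_sub_psd {n : ℕ} {C : Matrix (Fin n) (Fin n) ℝ}
    (hC : C.IsHermitian) {c : ℝ} (h : ∀ i, hC.eigenvalues i ≤ c) :
    (c • 1 - C).PosSemidef := by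
  have hU : (hC.eigenvectorUnitary : Matrix (Fin n) (Fin n) ℝ) *
      star (hC.eigenvectorUnitary : Matrix (Fin n) (Fin n) ℝ) = 1 :=
    (Matrix.mem_unitaryGroup_iff).mp hC.eigenvectorUnitary.2
  have key : c • 1 - C = (hC.eigenvectorUnitary : Matrix (Fin n) (Fin n) ℝ) *
      Matrix.diagonal (fun i => c - hC.eigenvalues i) *
      (hC.eigenvectorUnitary : Matrix (Fin n) (Fin n) ℝ)ᴴ := by
    have : Matrix.diagonal (fun i => c - hC.eigenvalues i)
        = c • (1 : Matrix (Fin n) (Fin n) ℝ) - Matrix.diagonal (RCLike.ofReal ∘ hC.eigenvalues) := by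
      rw [Matrix.smul_one_eq_diagonal, Matrix.diagonal_sub]
      rfl
    rw [this, Matrix.mul_sub, Matrix.sub_mul]
    conv_lhs => rw [hC.spectral_theorem]
    congr 1
    rw [Matrix.mul_smul, Matrix.smul_mul, mul_one]
    change _ = c • ((hC.eigenvectorUnitary : Matrix (Fin n) (Fin n) ℝ) *
      star (hC.eigenvectorUnitary : Matrix (Fin n) (Fin n) ℝ))
    rw [hU]
  rw [key]
  exact (Matrix.PosSemidef.diagonal (fun i => sub_nonneg.mpr (h i))).mul_mul_conjTranspose_same _

set_option maxHeartbeats 1000000 in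
theorem deriv_profile_likelihood_bound {n m : ℕ} (hmn : m < n)
    (K : Matrix (Fin n) (Fin n) ℝ) (hKpd : K.PosDef)
    (η : ℝ) (hη : 0 ≤ η)
    (X : Matrix (Fin n) (Fin m) ℝ) (hX : X.rank = m)
    (hinv : IsUnit (Xᵀ * (K + η • 1)⁻¹ * X).det)
    (z : Fin n → ℝ) (hz : ¬ ∃ w : Fin m → ℝ, X *ᵥ w = z)
    (M₁ : Matrix (Fin n) (Fin n) ℝ)
    (hM₁ : M₁ = (K + η • 1)⁻¹
      - (K + η • 1)⁻¹ * X * (Xᵀ * (K + η • 1)⁻¹ * X)⁻¹ * Xᵀ * (K + η • 1)⁻¹)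
    (lam1 lamn : ℝ)
    (hlam1 : (∀ i, lam1 ≤ hKpd.1.eigenvalues i) ∧ ∃ i, hKpd.1.eigenvalues i = lam1)
    (hlamn : (∀ i, hKpd.1.eigenvalues i ≤ lamn) ∧ ∃ i, hKpd.1.eigenvalues i = lamn) :
    |M₁.trace / ((n : ℝ) - m) - (z ⬝ᵥ ((M₁ ^ 2) *ᵥ z)) / (z ⬝ᵥ (M₁ *ᵥ z))|
      ≤ (lam1 + η)⁻¹ - (lamn + η)⁻¹ := by
  set A := K + η • (1 : Matrix (Fin n) (Fin n) ℝ) with hAdef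
  obtain ⟨i1, hi1⟩ := hlam1.2
  obtain ⟨in', hin⟩ := hlamn.2
  have hlam1pos : 0 < lam1 := hi1 ▸ hKpd.eigenvalues_pos i1
  have hlamnpos : 0 < lamn := hin ▸ hKpd.eigenvalues_pos in'
  have hl1n : lam1 ≤ lamn := hi1 ▸ hlamn.1 i1
  set a := (lam1 + η)⁻¹ with hadef
  set b := (lamn + η)⁻¹ with hbdef
  have hl1η : 0 < lam1 + η := by linarith
  have hlnη : 0 < lamn + η := by linarith
  have hapos : 0 < a := inv_pos.mpr hl1η
  have hbpos : 0 < b := inv_pos.mpr hlnη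
  have hA : A.PosDef := by
    refine hKpd.add_posSemidef ?_
    rw [Matrix.smul_one_eq_diagonal]
    exact Matrix.PosSemidef.diagonal (fun i => hη)
  have hAu : IsUnit A.det := hA.det_pos.ne'.isUnit
  have hAinv : (A⁻¹).PosDef := hA.inv
  have hCps : (A⁻¹).PosSemidef := hAinv.posSemidef
  obtain ⟨S, hS, hSS⟩ : ∃ S : Matrix (Fin n) (Fin n) ℝ, S.PosSemidef ∧ S * S = A⁻¹ := by
    open scoped MatrixOrder in
    exact ⟨CFC.sqrt A⁻¹, (CFC.sqrt_nonneg _).posSemidef, CFC.sqrt_mul_sqrt_self _ hCps.nonneg⟩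
  have hSH : Sᴴ = S := hS.1
  have hST : Sᵀ = S := by rw [← Matrix.conjTranspose_eq_transpose_of_trivial]; exact hSH
  have hSu : IsUnit S.det := by
    have h1 : S.det * S.det = (A⁻¹).det := by rw [← Matrix.det_mul, hSS]
    have h2 : (A⁻¹).det ≠ 0 := hAinv.det_pos.ne'
    refine isUnit_iff_ne_zero.mpr (fun h => h2 ?_)
    rw [← h1, h, mul_zero]
  have hAT : Aᵀ = A := by
    rw [← Matrix.conjTranspose_eq_transpose_of_trivial]; exact hA.1
  have hAiT : (A⁻¹)ᵀ = A⁻¹ := by rw [Matrix.transpose_nonsing_inv, hAT]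
  set G := Xᵀ * A⁻¹ * X with hGdef
  have hGu : IsUnit G.det := hinv
  have hGT : Gᵀ = G := by
    rw [hGdef, Matrix.transpose_mul, Matrix.transpose_mul, Matrix.transpose_transpose, hAiT,
      Matrix.mul_assoc]
  have hGiT : (G⁻¹)ᵀ = G⁻¹ := by rw [Matrix.transpose_nonsing_inv, hGT]
  obtain ⟨P, hPdef⟩ : ∃ P', P' = S * X * G⁻¹ * Xᵀ * S := ⟨_, rfl⟩
  obtain ⟨Q, hQdef⟩ : ∃ Q', Q' = (1 : Matrix (Fin n) (Fin n) ℝ) - P := ⟨_, rfl⟩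
  have hSSl : ∀ {p : Type} [Fintype p] (B : Matrix (Fin n) p ℝ), S * (S * B) = A⁻¹ * B := by
    intro p _ B; rw [← Matrix.mul_assoc, hSS]
  have hPP : P * P = P := by
    rw [hPdef]
    simp only [Matrix.mul_assoc]
    rw [← Matrix.mul_assoc S S, hSS]
    rw [← Matrix.mul_assoc Xᵀ A⁻¹ (X * _), ← Matrix.mul_assoc (Xᵀ * A⁻¹) X, ← hGdef]
    rw [← Matrix.mul_assoc G⁻¹ G, Matrix.nonsing_inv_mul _ hGu, Matrix.one_mul]
  have hPT : Pᵀ = P := by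
    rw [hPdef]
    simp only [Matrix.transpose_mul, Matrix.transpose_transpose, hST, hGiT]
    simp only [Matrix.mul_assoc]
  have hQT : Qᵀ = Q := by rw [hQdef, Matrix.transpose_sub, Matrix.transpose_one, hPT]
  have hQH : Qᴴ = Q := by rw [Matrix.conjTranspose_eq_transpose_of_trivial, hQT]
  have hQQ : Q * Q = Q := by
    rw [hQdef, Matrix.sub_mul, Matrix.one_mul, Matrix.mul_sub, Matrix.mul_one, hPP, sub_self,
      sub_zero]
  have hM : M₁ = S * Q * S := by
    rw [hM₁, hQdef, Matrix.mul_sub, Matrix.sub_mul, Matrix.mul_one, hSS]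
    congr 1
    rw [hPdef]
    simp only [Matrix.mul_assoc]
    rw [hSS, hSSl]
  have hSAS : S * A * S = 1 := by
    have h0 : S * A * S * S = S := by
      rw [Matrix.mul_assoc (S * A) S S, hSS, Matrix.mul_assoc,
        Matrix.mul_nonsing_inv _ hAu, Matrix.mul_one]
    have h1 : S * A * S * S * S⁻¹ = S * S⁻¹ := by rw [h0]
    rwa [Matrix.mul_nonsing_inv_cancel_right _ _ hSu, Matrix.mul_nonsing_inv _ hSu] at h1
  have ha1 : a * (lam1 + η) = 1 := inv_mul_cancel₀ hl1η.ne'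
  have hb1 : b * (lamn + η) = 1 := inv_mul_cancel₀ hlnη.ne'
  have hK1psd : (K - lam1 • 1).PosSemidef := sub_smul_one_psd hKpd.1 hlam1.1
  have hKnpsd : (lamn • 1 - K).PosSemidef := smul_one_sub_psd hKpd.1 hlamn.1
  have e1 : a • (K - lam1 • (1 : Matrix (Fin n) (Fin n) ℝ)) = a • A - 1 := by
    rw [hAdef, hadef]
    ext i j
    by_cases h : i = j <;>
      simp only [Matrix.sub_apply, Matrix.add_apply, Matrix.smul_apply, Matrix.one_apply, h,
        smul_eq_mul, if_true, if_neg, mul_one, mul_zero, sub_zero, add_zero, mul_ite, ite_mul]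
    · field_simp; ring
    · simp [h]
  have e2 : b • (lamn • (1 : Matrix (Fin n) (Fin n) ℝ) - K) = 1 - b • A := by
    rw [hAdef, hbdef]
    ext i j
    by_cases h : i = j <;>
      simp only [Matrix.sub_apply, Matrix.add_apply, Matrix.smul_apply, Matrix.one_apply, h,
        smul_eq_mul, if_true, if_neg, mul_one, mul_zero, sub_zero, add_zero, mul_ite, ite_mul]
    · field_simp; ring
    · simp [h]
  have hPSDa : ((a • 1 : Matrix (Fin n) (Fin n) ℝ) - A⁻¹).PosSemidef := by
    have hpsd : (a • (K - lam1 • (1 : Matrix (Fin n) (Fin n) ℝ))).PosSemidef :=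
      psd_smul hK1psd hapos.le
    have h1 := hpsd.mul_mul_conjTranspose_same S
    rw [hSH, e1] at h1
    have heq : S * (a • A - 1) * S = a • 1 - A⁻¹ := by
      rw [Matrix.mul_sub, Matrix.sub_mul, Matrix.mul_smul, Matrix.smul_mul, hSAS,
        Matrix.mul_one, hSS]
    rwa [heq] at h1
  have hPSDb : (A⁻¹ - (b • 1 : Matrix (Fin n) (Fin n) ℝ)).PosSemidef := by
    have hpsd : (b • (lamn • (1 : Matrix (Fin n) (Fin n) ℝ) - K)).PosSemidef :=
      psd_smul hKnpsd hbpos.le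
    have h1 := hpsd.mul_mul_conjTranspose_same S
    rw [hSH, e2] at h1
    have heq : S * (1 - b • A) * S = A⁻¹ - b • 1 := by
      rw [Matrix.mul_sub, Matrix.sub_mul, Matrix.mul_smul, Matrix.smul_mul, hSAS,
        Matrix.mul_one, hSS]
    rwa [heq] at h1
  have hquad : ∀ (M : Matrix (Fin n) (Fin n) ℝ), M.PosSemidef → ∀ v : Fin n → ℝ,
      0 ≤ v ⬝ᵥ (M *ᵥ v) := by
    intro M hMp v
    simpa using hMp.dotProduct_mulVec_nonneg v
  have hqa : ∀ v : Fin n → ℝ, v ⬝ᵥ (A⁻¹ *ᵥ v) ≤ a * (v ⬝ᵥ v) := by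
    intro v
    have h1 := hquad _ hPSDa v
    rw [Matrix.sub_mulVec, dotProduct_sub, Matrix.smul_mulVec, Matrix.one_mulVec,
      dotProduct_smul, smul_eq_mul] at h1
    linarith
  have hqb : ∀ v : Fin n → ℝ, b * (v ⬝ᵥ v) ≤ v ⬝ᵥ (A⁻¹ *ᵥ v) := by
    intro v
    have h1 := hquad _ hPSDb v
    rw [Matrix.sub_mulVec, dotProduct_sub, Matrix.smul_mulVec, Matrix.one_mulVec,
      dotProduct_smul, smul_eq_mul] at h1
    linarith
  -- trace computations
  have htrQ : Q.trace = (n : ℝ) - m := by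
    rw [hQdef, Matrix.trace_sub, Matrix.trace_one, hPdef]
    have t1 : (S * X * G⁻¹ * Xᵀ * S).trace = (G * G⁻¹).trace := by
      calc (S * X * G⁻¹ * Xᵀ * S).trace
          = (S * (S * (X * (G⁻¹ * Xᵀ)))).trace := by
            rw [Matrix.trace_mul_comm (S * X * G⁻¹ * Xᵀ) S]
            simp only [Matrix.mul_assoc]
        _ = (A⁻¹ * (X * (G⁻¹ * Xᵀ))).trace := by rw [hSSl]
        _ = ((X * (G⁻¹ * Xᵀ)) * A⁻¹).trace := Matrix.trace_mul_comm _ _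
        _ = (G⁻¹ * (Xᵀ * (A⁻¹ * X))).trace := by
            rw [Matrix.mul_assoc, Matrix.trace_mul_comm X]
            simp only [Matrix.mul_assoc]
        _ = (G⁻¹ * G).trace := by
            rw [← Matrix.mul_assoc Xᵀ A⁻¹ X, ← hGdef]
        _ = (G * G⁻¹).trace := Matrix.trace_mul_comm _ _
    rw [t1, Matrix.mul_nonsing_inv _ hGu, Matrix.trace_one]
    simp
  have htrM : M₁.trace = (Q * A⁻¹ * Q).trace := by
    rw [hM]
    calc (S * Q * S).trace
        = (S * (S * Q)).trace := by
          rw [Matrix.trace_mul_comm (S * Q) S]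
      _ = (A⁻¹ * Q).trace := by rw [← Matrix.mul_assoc, hSS]
      _ = (A⁻¹ * Q * Q).trace := by rw [Matrix.mul_assoc, hQQ]
      _ = (Q * A⁻¹ * Q).trace := Matrix.trace_mul_cycle A⁻¹ Q Q
  have hexp_a : Q * ((a • 1 : Matrix (Fin n) (Fin n) ℝ) - A⁻¹) * Q
      = a • Q - Q * A⁻¹ * Q := by
    rw [Matrix.mul_sub, Matrix.sub_mul, Matrix.mul_smul, Matrix.mul_one, Matrix.smul_mul, hQQ]
  have hexp_b : Q * (A⁻¹ - (b • 1 : Matrix (Fin n) (Fin n) ℝ)) * Q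
      = Q * A⁻¹ * Q - b • Q := by
    rw [Matrix.mul_sub, Matrix.sub_mul, Matrix.mul_smul, Matrix.mul_one, Matrix.smul_mul, hQQ]
  have htr_ub : M₁.trace ≤ a * ((n : ℝ) - m) := by
    have hp : (Q * ((a • 1 : Matrix (Fin n) (Fin n) ℝ) - A⁻¹) * Qᴴ).PosSemidef :=
      hPSDa.mul_mul_conjTranspose_same Q
    rw [hQH, hexp_a] at hp
    have h1 := psd_trace_nonneg hp
    rw [Matrix.trace_sub, Matrix.trace_smul, smul_eq_mul, htrQ] at h1
    rw [htrM]
    linarith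
  have htr_lb : b * ((n : ℝ) - m) ≤ M₁.trace := by
    have hp : (Q * (A⁻¹ - (b • 1 : Matrix (Fin n) (Fin n) ℝ)) * Qᴴ).PosSemidef :=
      hPSDb.mul_mul_conjTranspose_same Q
    rw [hQH, hexp_b] at hp
    have h1 := psd_trace_nonneg hp
    rw [Matrix.trace_sub, Matrix.trace_smul, smul_eq_mul, htrQ] at h1
    rw [htrM]
    linarith
  -- Rayleigh quotient
  have hdsym : ∀ (N : Matrix (Fin n) (Fin n) ℝ), Nᵀ = N → ∀ x y : Fin n → ℝ,
      x ⬝ᵥ (N *ᵥ y) = (N *ᵥ x) ⬝ᵥ y := by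
    intro N hN x y
    rw [Matrix.dotProduct_mulVec, ← Matrix.vecMul_transpose, hN]
  obtain ⟨w, hwdef⟩ : ∃ w', w' = S *ᵥ z := ⟨_, rfl⟩
  obtain ⟨u, hudef⟩ : ∃ u', u' = Q *ᵥ w := ⟨_, rfl⟩
  have h1 : M₁ *ᵥ z = S *ᵥ u := by
    rw [hM, hudef, hwdef, ← Matrix.mulVec_mulVec, ← Matrix.mulVec_mulVec]
  have h2 : u ⬝ᵥ u = w ⬝ᵥ u := by
    rw [hudef, ← hdsym Q hQT w (Q *ᵥ w), Matrix.mulVec_mulVec, hQQ]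
  have hzMz : z ⬝ᵥ (M₁ *ᵥ z) = u ⬝ᵥ u := by
    rw [h1, hdsym S hST z u, ← hwdef, h2]
  have h3 : (M₁ ^ 2) *ᵥ z = S *ᵥ (Q *ᵥ (A⁻¹ *ᵥ u)) := by
    rw [pow_two, ← Matrix.mulVec_mulVec, h1, hM,
      ← Matrix.mulVec_mulVec (S *ᵥ u) (S * Q) S,
      Matrix.mulVec_mulVec u S S, hSS,
      ← Matrix.mulVec_mulVec (A⁻¹ *ᵥ u) S Q]
  have hzM2z : z ⬝ᵥ ((M₁ ^ 2) *ᵥ z) = u ⬝ᵥ (A⁻¹ *ᵥ u) := by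
    rw [h3, hdsym S hST, ← hwdef, hdsym Q hQT, ← hudef]
  have hune : u ≠ 0 := by
    intro h0
    apply hz
    have hq0 : w - P *ᵥ w = 0 := by
      rw [hudef, hQdef, Matrix.sub_mulVec, Matrix.one_mulVec] at h0
      exact h0
    have hwP : w = P *ᵥ w := sub_eq_zero.mp hq0
    refine ⟨(G⁻¹ * (Xᵀ * S)) *ᵥ w, ?_⟩
    have h4 : S *ᵥ z = S *ᵥ (X *ᵥ ((G⁻¹ * (Xᵀ * S)) *ᵥ w)) := by
      rw [← hwdef]
      nth_rewrite 1 [hwP]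
      rw [hPdef]
      simp only [← Matrix.mulVec_mulVec, Matrix.mul_assoc]
    exact ((Matrix.mulVec_injective_iff_isUnit (A := S)).mpr ((Matrix.isUnit_iff_isUnit_det S).mpr hSu) h4).symm
  have hup0 : 0 ≤ u ⬝ᵥ u := Finset.sum_nonneg fun i _ => mul_self_nonneg (u i)
  have hupos : 0 < u ⬝ᵥ u :=
    lt_of_le_of_ne hup0 (Ne.symm fun h => hune (dotProduct_self_eq_zero.mp h))
  have hnm : (0 : ℝ) < (n : ℝ) - m := by
    have : (m : ℝ) < n := by exact_mod_cast hmn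
    linarith
  have hT1 : M₁.trace / ((n : ℝ) - m) ≤ a := by
    rw [div_le_iff₀ hnm]; linarith
  have hT2 : b ≤ M₁.trace / ((n : ℝ) - m) := by
    rw [le_div_iff₀ hnm]; linarith
  have hR1 : (z ⬝ᵥ ((M₁ ^ 2) *ᵥ z)) / (z ⬝ᵥ (M₁ *ᵥ z)) ≤ a := by
    rw [hzM2z, hzMz, div_le_iff₀ hupos]
    have := hqa u
    linarith
  have hR2 : b ≤ (z ⬝ᵥ ((M₁ ^ 2) *ᵥ z)) / (z ⬝ᵥ (M₁ *ᵥ z)) := by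
    rw [hzM2z, hzMz, le_div_iff₀ hupos]
    have := hqb u
    linarith
  rw [abs_sub_le_iff]
  constructor <;> linarith
end
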